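/- With γ and S as before (γ(t) = r(cosθ₀, sinθ₀) + iε(cos t, sin t), S = {z₂/z₁ ∈ ℝ_{<0}}, with π/2 < θ₀ < π or 3π/2 < θ₀ < 2π so that sinθ₀cosθ₀ < 0): the imaginary part of φ_*( γ'(t) ) at t = θ₀ is positive and at t = θ₀ + π is negative, where φ(z₁,z₂) = z₂/z₁. Concretely: Im( d/dt [ (r sinθ₀ + iε sin t)/(r cosθ₀ + iε cos t) ] ) > 0 at t = θ₀ and < 0 at t = θ₀ + π. -/

import Mathlib

open Complex Real

lemma aux_hasDeriv (r ε θ₀ : ℝ) (t : ℝ)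
    (hden : ((r * Real.cos θ₀ : ℂ) + (ε * Real.cos t : ℂ) * I) ≠ 0) :
    HasDerivAt (fun t : ℝ =>
        ((r * Real.sin θ₀ : ℂ) + (ε * Real.sin t : ℂ) * I) /
        ((r * Real.cos θ₀ : ℂ) + (ε * Real.cos t : ℂ) * I))
      ((((ε * Real.cos t : ℂ) * I) * ((r * Real.cos θ₀ : ℂ) + (ε * Real.cos t : ℂ) * I)
        - ((r * Real.sin θ₀ : ℂ) + (ε * Real.sin t : ℂ) * I) * ((-(ε * Real.sin t) : ℂ) * I))
        / ((r * Real.cos θ₀ : ℂ) + (ε * Real.cos t : ℂ) * I) ^ 2) t := by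
  have h1 : HasDerivAt (fun t : ℝ => ((r * Real.sin θ₀ : ℂ) + (ε * Real.sin t : ℂ) * I))
      ((ε * Real.cos t : ℂ) * I) t := by
    have := (((Real.hasDerivAt_sin t).const_mul ε).ofReal_comp).mul_const I
    simpa using this.const_add ((r * Real.sin θ₀ : ℂ))
  have h2 : HasDerivAt (fun t : ℝ => ((r * Real.cos θ₀ : ℂ) + (ε * Real.cos t : ℂ) * I))
      ((-(ε * Real.sin t) : ℂ) * I) t := by
    have := (((Real.hasDerivAt_cos t).const_mul ε).ofReal_comp).mul_const I
    simpa [mul_comm, mul_assoc, mul_left_comm] using this.const_add ((r * Real.cos θ₀ : ℂ))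
  exact h1.div h2 hden

/-- Signs of the imaginary part of the derivative of `φ∘γ` at the two
crossing times: for `φ(z₁,z₂) = z₂/z₁` and
`γ(t) = r(cosθ₀, sinθ₀) + iε(cos t, sin t)` with `sinθ₀cosθ₀ < 0`, the
imaginary part of `(φ∘γ)'` is positive at `t = θ₀` and negative at
`t = θ₀ + π`. -/
theorem crossing_derivative_signs (r ε θ₀ : ℝ) (hr : 0 < r) (hε : 0 < ε)
    (hsc : Real.sin θ₀ * Real.cos θ₀ < 0) :
    0 < (deriv (fun t : ℝ =>
        ((r * Real.sin θ₀ : ℂ) + (ε * Real.sin t : ℂ) * I) /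
        ((r * Real.cos θ₀ : ℂ) + (ε * Real.cos t : ℂ) * I)) θ₀).im ∧
    (deriv (fun t : ℝ =>
        ((r * Real.sin θ₀ : ℂ) + (ε * Real.sin t : ℂ) * I) /
        ((r * Real.cos θ₀ : ℂ) + (ε * Real.cos t : ℂ) * I)) (θ₀ + π)).im < 0 := by
  have hc : Real.cos θ₀ ≠ 0 := by rintro h; rw [h] at hsc; simp at hsc
  have hs : Real.sin θ₀ ≠ 0 := by rintro h; rw [h] at hsc; simp at hsc
  have hpyth := Real.sin_sq_add_cos_sq θ₀
  have hden1 : ((r * Real.cos θ₀ : ℂ) + (ε * Real.cos θ₀ : ℂ) * I) ≠ 0 := by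
    intro h
    have := congrArg Complex.re h
    simp at this
    rcases this with h | h
    · exact hr.ne' h
    · exact hc h
  have hden2 : ((r * Real.cos θ₀ : ℂ) + (ε * Real.cos (θ₀ + π) : ℂ) * I) ≠ 0 := by
    intro h
    have := congrArg Complex.re h
    simp at this
    rcases this with h | h
    · exact hr.ne' h
    · exact hc h
  have hd1 := (aux_hasDeriv r ε θ₀ θ₀ hden1).deriv
  have hd2 := (aux_hasDeriv r ε θ₀ (θ₀ + π) hden2).deriv
  rw [hd1, hd2]
  have hs2 : Real.sin θ₀ ^ 2 = 1 - Real.cos θ₀ ^ 2 := by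
    have := Real.sin_sq_add_cos_sq θ₀; linarith
  constructor
  · rw [Complex.div_im, div_sub_div_same]
    apply div_pos
    · simp only [Complex.add_im, Complex.add_re,
        Complex.mul_im, Complex.mul_re, Complex.ofReal_re, Complex.ofReal_im,
        Complex.I_re, Complex.I_im, Complex.sub_re, Complex.sub_im, Complex.neg_re,
        Complex.neg_im, Complex.ofReal_neg, pow_two]
      ring_nf
      rw [hs2]
      have hc2 : (0:ℝ) < Real.cos θ₀ ^ 2 :=
        ((pow_ne_zero 2 hc).symm).lt_of_le (sq_nonneg _)
      nlinarith [mul_pos (mul_pos (mul_pos hε hr) hc2) (mul_pos hr hr),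
        mul_pos (mul_pos (mul_pos hε hr) hc2) (mul_pos hε hε)]
    · exact Complex.normSq_pos.mpr (pow_ne_zero 2 hden1)
  · rw [Complex.div_im, div_sub_div_same]
    apply div_neg_of_neg_of_pos
    · simp only [Real.cos_add_pi, Real.sin_add_pi, Complex.add_im, Complex.add_re,
        Complex.mul_im, Complex.mul_re, Complex.ofReal_re, Complex.ofReal_im,
        Complex.I_re, Complex.I_im, Complex.sub_re, Complex.sub_im, Complex.neg_re,
        Complex.neg_im, Complex.ofReal_neg, pow_two]
      ring_nf
      rw [hs2]
      have hc2 : (0:ℝ) < Real.cos θ₀ ^ 2 :=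
        ((pow_ne_zero 2 hc).symm).lt_of_le (sq_nonneg _)
      nlinarith [mul_pos (mul_pos (mul_pos hε hr) hc2) (mul_pos hr hr),
        mul_pos (mul_pos (mul_pos hε hr) hc2) (mul_pos hε hε)]
    · exact Complex.normSq_pos.mpr (pow_ne_zero 2 hden2)
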